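/- Assume: Ψ(r,R) = ψ₃₀r³ + ψ₂₁r²R + ψ₁₂rR² + ψ₀₃R³ + o((|r|+|R|)³) and ∂Ψ/∂r(r,R) = 3ψ₃₀r² + 2ψ₂₁rR + ψ₁₂R² + o((|r|+|R|)²) as (r,R)→(0,0), with ψ₃₀ > 0; Y(r,R) = 1 + y₂₀r² + y₁₁rR + y₀₂R² + o((|r|+|R|)²); Q(r) = q₀r^{2+p} + o(r^{2+p}) and Q'(r) = (2+p)q₀r^{1+p} + o(r^{1+p}) as r→0⁺, with q₀ ≠ 0 and real p > 1. Define Ψ₁ := Ψ − Q²/(2R), Y₁ := (1 − QQ'/(R·∂Ψ/∂r))·Y, and u₁² := 2Ψ₁/R − 1 + Y₁². Then for every k > 0, lim_{r→0⁺} (kr^{2p+1})·u₁²(r,kr^{2p+1})/r³ = 2ψ₃₀ − q₀²/k; in particular this limit vanishes exactly when k = q₀²/(2ψ₃₀). -/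

import Mathlib

open Filter Topology Asymptotics

lemma my_rpow_tendsto {a : ℝ} (ha : 0 < a) :
    Tendsto (fun r : ℝ => r ^ a) (𝓝[>] 0) (𝓝 0) := by
  have h := (Real.continuousAt_rpow_const 0 a (Or.inr ha.le)).tendsto
  rw [Real.zero_rpow ha.ne'] at h
  exact h.mono_left nhdsWithin_le_nhds

lemma my_curve_tendsto {k p : ℝ} (hk : 0 < k) (hp : 1 < p) :
    Tendsto (fun r : ℝ => (r, k * r ^ (2*p+1))) (𝓝[>] (0:ℝ)) (𝓝 ((0:ℝ), (0:ℝ))) := by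
  rw [nhds_prod_eq]
  refine Tendsto.prodMk ?_ ?_
  · exact tendsto_id.mono_right nhdsWithin_le_nhds
  · simpa using (my_rpow_tendsto (by linarith : (0:ℝ) < 2*p+1)).const_mul k

lemma my_comp_littleo {f : ℝ × ℝ → ℝ} {k p : ℝ} (hk : 0 < k) (hp : 1 < p) (n : ℕ)
    (h : f =o[𝓝 ((0:ℝ), (0:ℝ))] fun q : ℝ × ℝ => (|q.1| + |q.2|)^n) :
    Tendsto (fun r : ℝ => f (r, k * r ^ (2*p+1)) / r ^ n) (𝓝[>] (0:ℝ)) (𝓝 0) := by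
  have hcomp := h.comp_tendsto (my_curve_tendsto hk hp)
  have hsm : ∀ᶠ r : ℝ in 𝓝[>] 0, k * r ^ (2*p) < 1 := by
    have t : Tendsto (fun r : ℝ => k * r ^ (2*p)) (𝓝[>] 0) (𝓝 0) := by
      simpa using (my_rpow_tendsto (by linarith : (0:ℝ) < 2*p)).const_mul k
    exact t.eventually_lt_const one_pos
  have hO : (fun r : ℝ => (|r| + |k * r ^ (2*p+1)|)^n) =O[𝓝[>] (0:ℝ)]
      (fun r : ℝ => r ^ n) := by
    rw [isBigO_iff]
    refine ⟨2^n, ?_⟩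
    filter_upwards [self_mem_nhdsWithin, hsm] with r hr hs
    have hr : (0:ℝ) < r := hr
    have h1 : r ^ (2*p+1) = r ^ (2*p) * r := by
      rw [Real.rpow_add hr, Real.rpow_one]
    have h2 : k * r ^ (2*p+1) ≤ r := by
      rw [h1, ← mul_assoc]
      nlinarith [Real.rpow_pos_of_pos hr (2*p), Real.rpow_nonneg hr.le (2*p)]
    have h3 : 0 ≤ k * r ^ (2*p+1) := by positivity
    have h4 : |r| + |k * r ^ (2*p+1)| ≤ 2 * r := by
      rw [abs_of_pos hr, abs_of_nonneg h3]; linarith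
    have h5 : (|r| + |k * r ^ (2*p+1)|)^n ≤ (2*r)^n :=
      pow_le_pow_left₀ (by positivity) h4 n
    rw [Real.norm_eq_abs, Real.norm_eq_abs,
      abs_of_nonneg (by positivity : (0:ℝ) ≤ (|r| + |k * r ^ (2*p+1)|)^n),
      abs_of_nonneg (by positivity : (0:ℝ) ≤ r^n)]
    calc (|r| + |k * r ^ (2*p+1)|)^n ≤ (2*r)^n := h5
      _ = 2^n * r^n := by ring
  exact (hcomp.trans_isBigO hO).tendsto_div_nhds_zero


/-- The charged velocity function
`u₁²(r,R) = 2Ψ₁/R − 1 + Y₁²`, with `Ψ₁ = Ψ − Q²/(2R)` and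
`Y₁ = (1 − QQ'/(R·∂Ψ/∂r))·Y`. -/
noncomputable def u1sq (Ψ Ψr Y : ℝ → ℝ → ℝ) (Q Q' : ℝ → ℝ) (r R : ℝ) : ℝ :=
  2 * (Ψ r R - Q r ^ 2 / (2 * R)) / R - 1
    + ((1 - Q r * Q' r / (R * Ψr r R)) * Y r R) ^ 2

/-- Behavior of `R·u₁²` along the curves `R = k r^{2p+1}` in the case `p > 1`:
`(kr^{2p+1})·u₁²(r,kr^{2p+1}) = (2ψ₃₀ − q₀²/k)·r³ + o(r³)`, with the limit
vanishing exactly when `k = q₀²/(2ψ₃₀)`. -/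
theorem curve_kr2p1_limit_u1sq
    (Ψ Ψr Y : ℝ → ℝ → ℝ) (Q Q' : ℝ → ℝ)
    (ψ30 ψ21 ψ12 ψ03 y20 y11 y02 q0 p : ℝ)
    (hψ30 : 0 < ψ30) (hq0 : q0 ≠ 0) (hp : 1 < p)
    (hlink : ∀ r R, HasDerivAt (fun s => Ψ s R) (Ψr r R) r)
    (hQd : ∀ r, HasDerivAt Q (Q' r) r)
    (hΨ : (fun q : ℝ × ℝ =>
        Ψ q.1 q.2 - (ψ30*q.1^3 + ψ21*q.1^2*q.2 + ψ12*q.1*q.2^2 + ψ03*q.2^3))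
      =o[nhds ((0:ℝ), (0:ℝ))] fun q : ℝ × ℝ => (|q.1| + |q.2|)^3)
    (hΨr : (fun q : ℝ × ℝ =>
        Ψr q.1 q.2 - (3*ψ30*q.1^2 + 2*ψ21*q.1*q.2 + ψ12*q.2^2))
      =o[nhds ((0:ℝ), (0:ℝ))] fun q : ℝ × ℝ => (|q.1| + |q.2|)^2)
    (hY : (fun q : ℝ × ℝ =>
        Y q.1 q.2 - (1 + y20*q.1^2 + y11*q.1*q.2 + y02*q.2^2))
      =o[nhds ((0:ℝ), (0:ℝ))] fun q : ℝ × ℝ => (|q.1| + |q.2|)^2)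
    (hQ : (fun r : ℝ => Q r - q0 * r ^ (2+p)) =o[𝓝[>] (0:ℝ)] fun r : ℝ => r ^ (2+p))
    (hQ' : (fun r : ℝ => Q' r - (2+p) * q0 * r ^ (1+p))
      =o[𝓝[>] (0:ℝ)] fun r : ℝ => r ^ (1+p)) :
    ∀ k : ℝ, 0 < k →
      Tendsto (fun r : ℝ =>
          (k * r ^ (2*p+1)) * u1sq Ψ Ψr Y Q Q' r (k * r ^ (2*p+1)) / r^3)
        (𝓝[>] (0:ℝ)) (𝓝 (2*ψ30 - q0^2 / k)) ∧
      (2*ψ30 - q0^2 / k = 0 ↔ k = q0^2 / (2*ψ30)) := by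
  intro k hk
  constructor
  · -- abbreviations
    have hφ := my_curve_tendsto hk hp (k := k) (p := p)
    have tk2p : Tendsto (fun r : ℝ => k * r ^ (2*p)) (𝓝[>] 0) (𝓝 0) := by
      simpa using (my_rpow_tendsto (by linarith : (0:ℝ) < 2*p)).const_mul k
    -- t1 : Ψ along curve
    have t1 : Tendsto (fun r : ℝ => Ψ r (k * r ^ (2*p+1)) / r^3) (𝓝[>] 0) (𝓝 ψ30) := by
      have hA := my_comp_littleo hk hp 3 hΨ
      have hpoly : Tendsto (fun x : ℝ => ψ30 + ψ21*x + ψ12*x^2 + ψ03*x^3) (𝓝 0) (𝓝 ψ30) := by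
        have hc : Continuous fun x : ℝ => ψ30 + ψ21*x + ψ12*x^2 + ψ03*x^3 := by fun_prop
        simpa using hc.tendsto 0
      have hB := hpoly.comp tk2p
      have heq : (fun r : ℝ => Ψ r (k * r ^ (2*p+1)) / r^3) =ᶠ[𝓝[>] (0:ℝ)]
          fun r => (Ψ r (k * r ^ (2*p+1)) -
            (ψ30*r^3 + ψ21*r^2*(k * r ^ (2*p+1)) + ψ12*r*(k * r ^ (2*p+1))^2
              + ψ03*(k * r ^ (2*p+1))^3)) / r^3
          + (ψ30 + ψ21*(k * r ^ (2*p)) + ψ12*(k * r ^ (2*p))^2 + ψ03*(k * r ^ (2*p))^3) := by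
        filter_upwards [self_mem_nhdsWithin] with r hr
        have hr : (0:ℝ) < r := hr
        have h1 : r ^ (2*p+1) = r ^ (2*p) * r := by
          rw [Real.rpow_add hr, Real.rpow_one]
        rw [h1]
        field_simp
        ring
      refine Tendsto.congr' heq.symm ?_
      simpa using hA.add hB
    -- t2 : Ψr along curve
    have t2 : Tendsto (fun r : ℝ => Ψr r (k * r ^ (2*p+1)) / r^2) (𝓝[>] 0) (𝓝 (3*ψ30)) := by
      have hA := my_comp_littleo hk hp 2 hΨr
      have hpoly : Tendsto (fun x : ℝ => 3*ψ30 + 2*ψ21*x + ψ12*x^2) (𝓝 0) (𝓝 (3*ψ30)) := by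
        have hc : Continuous fun x : ℝ => 3*ψ30 + 2*ψ21*x + ψ12*x^2 := by fun_prop
        simpa using hc.tendsto 0
      have hB := hpoly.comp tk2p
      have heq : (fun r : ℝ => Ψr r (k * r ^ (2*p+1)) / r^2) =ᶠ[𝓝[>] (0:ℝ)]
          fun r => (Ψr r (k * r ^ (2*p+1)) -
            (3*ψ30*r^2 + 2*ψ21*r*(k * r ^ (2*p+1)) + ψ12*(k * r ^ (2*p+1))^2)) / r^2
          + (3*ψ30 + 2*ψ21*(k * r ^ (2*p)) + ψ12*(k * r ^ (2*p))^2) := by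
        filter_upwards [self_mem_nhdsWithin] with r hr
        have hr : (0:ℝ) < r := hr
        have h1 : r ^ (2*p+1) = r ^ (2*p) * r := by
          rw [Real.rpow_add hr, Real.rpow_one]
        rw [h1]
        field_simp
        ring
      refine Tendsto.congr' heq.symm ?_
      simpa using hA.add hB
    -- t3 : Y along curve
    have t3 : Tendsto (fun r : ℝ => Y r (k * r ^ (2*p+1))) (𝓝[>] 0) (𝓝 1) := by
      have hb : Tendsto (fun r : ℝ => (|r| + |k * r ^ (2*p+1)|)^2) (𝓝[>] 0) (𝓝 0) := by
        have hc : Continuous fun q : ℝ × ℝ => (|q.1| + |q.2|)^2 := by fun_prop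
        have := (hc.tendsto ((0:ℝ),(0:ℝ))).comp hφ
        simpa [Function.comp_def] using this
      have hdiff : Tendsto (fun r : ℝ => Y r (k * r ^ (2*p+1)) -
          (1 + y20*r^2 + y11*r*(k * r ^ (2*p+1)) + y02*(k * r ^ (2*p+1))^2))
          (𝓝[>] 0) (𝓝 0) :=
        ((hY.comp_tendsto hφ).isBigO).trans_tendsto hb
      have hpoly : Tendsto (fun r : ℝ =>
          1 + y20*r^2 + y11*r*(k * r ^ (2*p+1)) + y02*(k * r ^ (2*p+1))^2) (𝓝[>] 0) (𝓝 1) := by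
        have hc : Continuous fun q : ℝ × ℝ => 1 + y20*q.1^2 + y11*q.1*q.2 + y02*q.2^2 := by fun_prop
        have := (hc.tendsto ((0:ℝ),(0:ℝ))).comp hφ
        simpa [Function.comp_def] using this
      simpa using hdiff.add hpoly
    -- t4 : Q / r^(2+p)
    have t4 : Tendsto (fun r : ℝ => Q r / r ^ (2+p)) (𝓝[>] 0) (𝓝 q0) := by
      have hA := hQ.tendsto_div_nhds_zero
      have heq : (fun r : ℝ => Q r / r ^ (2+p)) =ᶠ[𝓝[>] (0:ℝ)]
          fun r => (Q r - q0 * r ^ (2+p)) / r ^ (2+p) + q0 := by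
        filter_upwards [self_mem_nhdsWithin] with r hr
        have hr : (0:ℝ) < r := hr
        have : r ^ (2+p) ≠ 0 := (Real.rpow_pos_of_pos hr _).ne'
        field_simp
        ring
      refine Tendsto.congr' heq.symm ?_
      simpa using hA.add tendsto_const_nhds
    -- t5 : Q' / r^(1+p)
    have t5 : Tendsto (fun r : ℝ => Q' r / r ^ (1+p)) (𝓝[>] 0) (𝓝 ((2+p)*q0)) := by
      have hA := hQ'.tendsto_div_nhds_zero
      have heq : (fun r : ℝ => Q' r / r ^ (1+p)) =ᶠ[𝓝[>] (0:ℝ)]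
          fun r => (Q' r - (2+p) * q0 * r ^ (1+p)) / r ^ (1+p) + (2+p)*q0 := by
        filter_upwards [self_mem_nhdsWithin] with r hr
        have hr : (0:ℝ) < r := hr
        have : r ^ (1+p) ≠ 0 := (Real.rpow_pos_of_pos hr _).ne'
        field_simp
        ring
      refine Tendsto.congr' heq.symm ?_
      simpa using hA.add tendsto_const_nhds
    -- t6 : the quotient QQ'/(R Ψr)
    have t6 : Tendsto (fun r : ℝ =>
        Q r * Q' r / (k * r ^ (2*p+1) * Ψr r (k * r ^ (2*p+1))))
        (𝓝[>] 0) (𝓝 ((2+p)*q0^2 / (3*k*ψ30))) := by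
      have hden : Tendsto (fun r : ℝ => k * (Ψr r (k * r ^ (2*p+1)) / r^2))
          (𝓝[>] 0) (𝓝 (k * (3*ψ30))) := t2.const_mul k
      have hnum : Tendsto (fun r : ℝ => (Q r / r ^ (2+p)) * (Q' r / r ^ (1+p)))
          (𝓝[>] 0) (𝓝 (q0 * ((2+p)*q0))) := t4.mul t5
      have hne : k * (3*ψ30) ≠ 0 := by positivity
      have hA := hnum.div hden hne
      have heq : (fun r : ℝ => (Q r / r ^ (2+p)) * (Q' r / r ^ (1+p))
            / (k * (Ψr r (k * r ^ (2*p+1)) / r^2))) =ᶠ[𝓝[>] (0:ℝ)]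
          fun r => Q r * Q' r / (k * r ^ (2*p+1) * Ψr r (k * r ^ (2*p+1))) := by
        filter_upwards [self_mem_nhdsWithin] with r hr
        have hr : (0:ℝ) < r := hr
        have hu : r ^ (2+p) ≠ 0 := (Real.rpow_pos_of_pos hr _).ne'
        have hv : r ^ (1+p) ≠ 0 := (Real.rpow_pos_of_pos hr _).ne'
        have hw : r ^ (2*p+1) ≠ 0 := (Real.rpow_pos_of_pos hr _).ne'
        rcases eq_or_ne (Ψr r (k * r ^ (2*p+1))) 0 with h0 | h0
        · simp [h0]
        · have he : r ^ (2+p) * r ^ (1+p) = r ^ (2*p+1) * r^2 := by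
            rw [← Real.rpow_natCast r 2, ← Real.rpow_add hr, ← Real.rpow_add hr]
            norm_num
            ring_nf
          field_simp
          linear_combination (-(Q r * Q' r)) * he
      have : Tendsto (fun r : ℝ =>
          Q r * Q' r / (k * r ^ (2*p+1) * Ψr r (k * r ^ (2*p+1)))) (𝓝[>] 0)
          (𝓝 (q0 * ((2+p)*q0) / (k * (3*ψ30)))) := Tendsto.congr' heq hA
      convert this using 2
      ring
    -- remaining pieces
    have piece3 : Tendsto (fun r : ℝ => k * r ^ (2*p-2)) (𝓝[>] 0) (𝓝 0) := by
      simpa using (my_rpow_tendsto (by linarith : (0:ℝ) < 2*p-2)).const_mul k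
    have piece2 : Tendsto (fun r : ℝ => (Q r / r ^ (2+p))^2 / k) (𝓝[>] 0) (𝓝 (q0^2 / k)) :=
      (t4.pow 2).div_const k
    have piece4 : Tendsto (fun r : ℝ => (k * r ^ (2*p-2)) *
        ((1 - Q r * Q' r / (k * r ^ (2*p+1) * Ψr r (k * r ^ (2*p+1))))
          * Y r (k * r ^ (2*p+1)))^2) (𝓝[>] 0) (𝓝 0) := by
      have := piece3.mul ((((tendsto_const_nhds : Tendsto (fun _ : ℝ => (1:ℝ)) (𝓝[>] (0:ℝ)) (𝓝 1)).sub t6).mul t3).pow 2)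
      simpa using this
    -- combine
    have tF : Tendsto (fun r : ℝ =>
        2 * (Ψ r (k * r ^ (2*p+1)) / r^3) - (Q r / r ^ (2+p))^2 / k - k * r ^ (2*p-2)
        + (k * r ^ (2*p-2)) *
          ((1 - Q r * Q' r / (k * r ^ (2*p+1) * Ψr r (k * r ^ (2*p+1))))
            * Y r (k * r ^ (2*p+1)))^2) (𝓝[>] 0) (𝓝 (2*ψ30 - q0^2 / k)) := by
      have := (((t1.const_mul 2).sub piece2).sub piece3).add piece4
      simpa using this
    refine Tendsto.congr' ?_ tF
    filter_upwards [self_mem_nhdsWithin] with r hr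
    have hr : (0:ℝ) < r := hr
    have hw : (0:ℝ) < r ^ (2*p+1) := Real.rpow_pos_of_pos hr _
    have hu : r ^ (2+p) ≠ 0 := (Real.rpow_pos_of_pos hr _).ne'
    have hz : r ^ (2*p-2) ≠ 0 := (Real.rpow_pos_of_pos hr _).ne'
    have e1 : r ^ (2*p+1) = r ^ (2*p-2) * r^3 := by
      rw [← Real.rpow_natCast r 3, ← Real.rpow_add hr]
      congr 1
      push_cast
      ring
    have e2 : (r ^ (2+p))^2 = r ^ (2*p+1) * r^3 := by
      rw [← Real.rpow_natCast (r ^ (2+p)) 2, ← Real.rpow_mul hr.le,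
        ← Real.rpow_natCast r 3, ← Real.rpow_add hr]
      congr 1
      push_cast
      ring
    simp only [u1sq]
    rw [div_pow, e2, e1]
    field_simp
  · constructor
    · intro h
      rw [sub_eq_zero] at h
      field_simp at h ⊢
      linarith
    · intro h
      subst h
      field_simp
      ring
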